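/- Let F_q be a finite field, A = F_q[T], and let k and m be positive integers. Then the sequence r_i = T^{i-1} (i = 1, ..., m) is an m-term permutation chain of kth power residue modulo P for infinitely many nonzero prime ideals P of A. -/

import Mathlib

/-- `c` is a `k`th power residue modulo the ideal `P`: there is `x` with `x ^ k ≡ c (mod P)`. -/
def IsKthPowerResidue {A : Type*} [CommRing A] (k : ℕ) (P : Ideal A) (c : A) : Prop :=
  ∃ x : A, x ^ k - c ∈ P

/-- `r 1, ..., r m` is an `m`-term permutation chain of `k`th power residue modulo `P`:
for every permutation `σ` of `{1, ..., m}`, the `m(m+1)/2` sums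
`∑_{l=i}^{j} r (σ l)` (`i ≤ j`) are pairwise incongruent modulo `P` and
each is a `k`th power residue modulo `P`. -/
def IsPermutationChain {A : Type*} [CommRing A] (k : ℕ) {m : ℕ} (P : Ideal A)
    (r : Fin m → A) : Prop :=
  ∀ σ : Equiv.Perm (Fin m),
    (∀ i j i' j' : Fin m, i ≤ j → i' ≤ j' → (i, j) ≠ (i', j') →
      (∑ l ∈ Finset.Icc i j, r (σ l)) - (∑ l ∈ Finset.Icc i' j', r (σ l)) ∉ P) ∧
    (∀ i j : Fin m, i ≤ j → IsKthPowerResidue k P (∑ l ∈ Finset.Icc i j, r (σ l)))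

section Helpers

open Polynomial IntermediateField

variable {Fq : Type*} [Field Fq] [Fintype Fq]

lemma euclid_values (G : Polynomial (Polynomial Fq)) (hG : G.Monic) (hdeg : 0 < G.natDegree)
    (D : Polynomial Fq) (hD : D ≠ 0) :
    ∃ f θ : Polynomial Fq, Irreducible f ∧ ¬ f ∣ D ∧ f ∣ G.eval θ := by
  classical
  obtain ⟨z, hz⟩ : ∃ z, G.eval z ≠ 0 := by
    by_contra h
    push_neg at h
    have : G = 0 := Polynomial.funext (fun x => by simp [h x])
    exact hG.ne_zero this
  set b := G.eval z with hbdef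
  set n := G.natDegree with hn
  set B := (Finset.range (n + 1)).sup (fun j => (G.coeff j).natDegree) with hB
  set M := B + b.natDegree + z.natDegree + D.natDegree + 1 with hM
  set s : Polynomial Fq := b * D * X ^ M with hs
  have hXM : (X : Polynomial Fq) ^ M ≠ 0 := pow_ne_zero _ X_ne_zero
  have hs0 : s ≠ 0 := mul_ne_zero (mul_ne_zero hz hD) hXM
  have hsdeg : s.natDegree = b.natDegree + D.natDegree + M := by
    rw [hs, natDegree_mul (mul_ne_zero hz hD) hXM, natDegree_mul hz hD, natDegree_X_pow]
  set t := z + s with ht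
  have htdeg : t.natDegree = b.natDegree + D.natDegree + M := by
    rw [ht, natDegree_add_eq_right_of_natDegree_lt, hsdeg]
    rw [hsdeg]; omega
  -- degree of the evaluated polynomial
  have hcoeff : ∀ j, j < n → ((G.coeff j) * t ^ j).natDegree < n * t.natDegree := by
    intro j hj
    calc ((G.coeff j) * t ^ j).natDegree ≤ (G.coeff j).natDegree + j * t.natDegree := by
          refine le_trans (natDegree_mul_le) ?_
          gcongr
          exact natDegree_pow_le
      _ < n * t.natDegree := by
          have h1 : (G.coeff j).natDegree ≤ B := by
            apply Finset.le_sup (f := fun j => (G.coeff j).natDegree)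
            simp; omega
          have h2 : B < t.natDegree := by rw [htdeg]; omega
          have : j * t.natDegree ≤ (n-1) * t.natDegree := by gcongr; omega
          have hnn : (n-1) * t.natDegree + t.natDegree = n * t.natDegree := by
            have : n - 1 + 1 = n := by omega
            rw [← Nat.succ_mul, Nat.succ_eq_add_one, this]
          omega
  have heval : G.eval t = t ^ n + ∑ j ∈ Finset.range n, G.coeff j * t ^ j := by
    rw [eval_eq_sum_range, Finset.sum_range_succ, ← hn, hG.coeff_natDegree, one_mul, add_comm]
  have hrdeg : (∑ j ∈ Finset.range n, G.coeff j * t ^ j).natDegree < n * t.natDegree := by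
    apply lt_of_le_of_lt (natDegree_sum_le _ _)
    rw [Finset.fold_max_lt]
    constructor
    · have : 0 < t.natDegree := by omega
      positivity
    · intro j hj
      exact hcoeff j (Finset.mem_range.mp hj)
  have htn : (t ^ n).natDegree = n * t.natDegree := by
    rw [natDegree_pow]
  have hevaldeg : (G.eval t).natDegree = n * t.natDegree := by
    rw [heval, natDegree_add_eq_left_of_natDegree_lt (by rw [htn]; exact hrdeg), htn]
  have hbig : b.natDegree < (G.eval t).natDegree := by
    rw [hevaldeg]
    calc b.natDegree < t.natDegree := by omega
      _ ≤ n * t.natDegree := Nat.le_mul_of_pos_left _ hdeg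
  have hevalne : G.eval t ≠ 0 := by
    intro h0
    rw [h0] at hbig; simp at hbig
  -- divisibility
  obtain ⟨w, hw⟩ : t - z ∣ G.eval t - b := sub_dvd_eval_sub t z G
  have htz : t - z = s := by ring
  set u := 1 + D * X ^ M * w with hu
  have hbu : G.eval t = b * u := by
    have : G.eval t = b + s * w := by rw [← htz]; linear_combination hw
    rw [this, hu, hs]; ring
  have hune : u ≠ 0 := by
    intro h0; rw [h0, mul_zero] at hbu; exact hevalne hbu
  have hudeg : 0 < u.natDegree := by
    by_contra h0
    have : (G.eval t).natDegree = b.natDegree + u.natDegree := by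
      rw [hbu, natDegree_mul hz hune]
    omega
  have huni : ¬ IsUnit u := fun h => by
    have := natDegree_eq_zero_of_isUnit h; omega
  obtain ⟨f, hf, hfu⟩ := WfDvdMonoid.exists_irreducible_factor huni hune
  refine ⟨f, t, hf, ?_, ?_⟩
  · intro hfD
    have : f ∣ 1 := by
      have : (1 : Polynomial Fq) = u - D * X ^ M * w := by rw [hu]; ring
      rw [this]
      exact dvd_sub hfu (Dvd.dvd.mul_right (Dvd.dvd.mul_right hfD _) _)
    exact hf.not_isUnit (isUnit_of_dvd_one this)
  · rw [hbu]; exact Dvd.dvd.mul_left hfu b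

lemma core_split (k₀ : ℕ) (hk₀ : (k₀ : Fq) ≠ 0) {ι : Type*} [Fintype ι]
    (c : ι → Polynomial Fq) (hc0 : ∀ i, c i ≠ 0) (hcinj : Function.Injective c)
    (D : Polynomial Fq) (hD : D ≠ 0) :
    ∃ f : Polynomial Fq, Irreducible f ∧ ¬ f ∣ D ∧
      ∀ i, ∃ x : Polynomial Fq, f ∣ x ^ k₀ - c i := by
  classical
  have hk0pos : k₀ ≠ 0 := by rintro rfl; simp at hk₀
  let K := FractionRing (Polynomial Fq)
  let φ : Polynomial Fq →+* K := algebraMap (Polynomial Fq) K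
  have hφ : Function.Injective φ := IsFractionRing.injective (Polynomial Fq) K
  have hkA : (k₀ : Polynomial Fq) ≠ 0 := by
    rw [← map_natCast (C : Fq →+* Polynomial Fq) k₀]
    exact C_ne_zero.mpr hk₀
  have hkK : (k₀ : K) ≠ 0 := by
    rw [← map_natCast φ k₀]
    intro h
    exact hkA (hφ (by rw [map_zero]; exact h))
  have hcK : ∀ i, φ (c i) ≠ 0 := fun i h => hc0 i (hφ (by rw [map_zero]; exact h))
  set Q : K[X] := ∏ i, (X ^ k₀ - C (φ (c i))) with hQ
  have hQsep : Q.Separable := by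
    apply Polynomial.separable_prod
    · intro i j hij
      have hne : φ (c j) - φ (c i) ≠ 0 :=
        sub_ne_zero.mpr (fun h => hij (hcinj (hφ h)).symm)
      refine ⟨C ((φ (c j) - φ (c i))⁻¹), -(C ((φ (c j) - φ (c i))⁻¹)), ?_⟩
      have h1 : C ((φ (c j) - φ (c i))⁻¹) * C (φ (c j) - φ (c i)) = 1 := by
        rw [← C_mul, inv_mul_cancel₀ hne, C_1]
      rw [map_sub] at h1
      simp only [Function.onFun]
      linear_combination h1
    · intro i
      exact Polynomial.separable_X_pow_sub_C _ hkK (hcK i)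
  have hQmonic : Q.Monic := monic_prod_of_monic _ _ (fun i _ => monic_X_pow_sub_C _ hk0pos)
  let L := Q.SplittingField
  haveI : IsGalois K L := IsGalois.of_separable_splitting_field hQsep
  obtain ⟨γ₀, hγ₀⟩ := Field.exists_primitive_element K L
  have hinjAL : ∀ x : Polynomial Fq, algebraMap (Polynomial Fq) L x = 0 → x = 0 := by
    intro x hx
    apply hφ
    apply (algebraMap K L).injective
    rw [IsScalarTower.algebraMap_apply (Polynomial Fq) K L] at hx
    rw [hx, map_zero, map_zero]
  have halg : IsAlgebraic (Polynomial Fq) γ₀ :=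
    (IsFractionRing.isAlgebraic_iff (Polynomial Fq) K L).mpr (Algebra.IsAlgebraic.isAlgebraic γ₀)
  obtain ⟨x, e0, he0, hxe⟩ : ∃ x : integralClosure (Polynomial Fq) L, ∃ e0 ≠ (0 : Polynomial Fq),
      algebraMap (Polynomial Fq) L e0 * γ₀ = x := by
    obtain ⟨y, hy, hint⟩ := halg.exists_integral_multiple
    exact ⟨⟨y • γ₀, hint⟩, y, hy, (Algebra.smul_def _ _).symm⟩
  set γ : L := (x : L) with hγdef
  have hγint : IsIntegral (Polynomial Fq) γ := x.2
  have hγKint : IsIntegral K γ := hγint.tower_top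
  have hγtop : K⟮γ⟯ = ⊤ := by
    rw [eq_top_iff, ← hγ₀, IntermediateField.adjoin_simple_le_iff]
    have hφe0 : φ e0 ≠ 0 := fun h => he0 (hφ (by simpa using h))
    have : γ₀ = algebraMap K L ((φ e0)⁻¹) * γ := by
      have h2 : algebraMap K L (φ e0) * γ₀ = γ := by
        rw [← IsScalarTower.algebraMap_apply (Polynomial Fq) K L]; exact hxe
      have hden : algebraMap K L (φ e0) ≠ 0 :=
        fun hz => hφe0 ((algebraMap K L).injective (by rw [hz, map_zero]))
      rw [← h2, map_inv₀, ← mul_assoc, inv_mul_cancel₀ hden, one_mul]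
    rw [this]
    exact mul_mem (K⟮γ⟯.algebraMap_mem _) (IntermediateField.mem_adjoin_simple_self K γ)
  have hadj : Algebra.adjoin K {γ} = ⊤ := by
    have h := IntermediateField.adjoin_simple_toSubalgebra_of_isAlgebraic hγKint.isAlgebraic
    rw [hγtop] at h
    rw [← h, IntermediateField.top_toSubalgebra]
  -- roots
  have hQsplits : Splits (Q.map (algebraMap K L)) := SplittingField.splits Q
  have hy : ∀ i, ∃ y : L, y ^ k₀ = algebraMap (Polynomial Fq) L (c i) := by
    intro i
    have hdvd : (X ^ k₀ - C (φ (c i))) ∣ Q := Finset.dvd_prod_of_mem _ (Finset.mem_univ i)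
    have hsp : Splits ((X ^ k₀ - C (φ (c i))).map (algebraMap K L)) :=
      hQsplits.of_dvd (Polynomial.map_ne_zero hQmonic.ne_zero) (Polynomial.map_dvd _ hdvd)
    have hdeg : (X ^ k₀ - C (φ (c i))).degree ≠ 0 := by
      rw [degree_X_pow_sub_C (Nat.pos_of_ne_zero hk0pos)]
      exact_mod_cast (Nat.cast_ne_zero (R := WithBot ℕ)).mpr hk0pos
    obtain ⟨y, hy⟩ := hsp.exists_eval_eq_zero (by rw [degree_map]; exact hdeg)
    refine ⟨y, ?_⟩
    have := hy
    rw [eval_map, eval₂_sub, eval₂_pow, eval₂_X, eval₂_C, sub_eq_zero] at this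
    rw [this, ← IsScalarTower.algebraMap_apply (Polynomial Fq) K L]
  choose y hypow using hy
  have hmem : ∀ i, ∃ H : K[X], aeval γ H = y i := by
    intro i
    have : y i ∈ Algebra.adjoin K {γ} := by rw [hadj]; trivial
    rwa [Algebra.adjoin_singleton_eq_range_aeval, AlgHom.mem_range] at this
  choose H hH using hmem
  -- clear denominators
  have hdenom : ∀ i, ∃ e : nonZeroDivisors (Polynomial Fq),
      (IsLocalization.integerNormalization (nonZeroDivisors (Polynomial Fq)) (H i)).map φ
        = (e : Polynomial Fq) • (H i) :=
    fun i => IsLocalization.integerNormalization_map_to_map _ (H i)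
  choose e he using hdenom
  set h : ι → Polynomial (Polynomial Fq) :=
    fun i => IsLocalization.integerNormalization (nonZeroDivisors (Polynomial Fq)) (H i) with hh
  have key : ∀ i, aeval γ (h i) = algebraMap (Polynomial Fq) L ((e i : Polynomial Fq)) * y i := by
    intro i
    rw [← Polynomial.aeval_map_algebraMap K, he i]
    rw [← IsScalarTower.algebraMap_smul K ((e i : Polynomial Fq)) (H i), map_smul,
      Algebra.smul_def, hH i, IsScalarTower.algebraMap_apply (Polynomial Fq) K L]
  haveI : Module.IsTorsionFree (Polynomial Fq) L :=
    Module.isTorsionFree_iff_algebraMap_injective.mpr ((injective_iff_map_eq_zero _).mpr hinjAL)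
  have hdvd : ∀ i, minpoly (Polynomial Fq) γ ∣
      (h i) ^ k₀ - C ((e i : Polynomial Fq) ^ k₀ * c i) := by
    intro i
    rw [← minpoly.isIntegrallyClosed_dvd_iff hγint]
    rw [map_sub, map_pow, key i, aeval_C, mul_pow, hypow i, ← map_pow, ← map_mul, sub_self]
  set G := minpoly (Polynomial Fq) γ with hG
  have hGmonic : G.Monic := minpoly.monic hγint
  have hGdeg : 0 < G.natDegree := minpoly.natDegree_pos hγint
  have hD' : D * ∏ i, (e i : Polynomial Fq) ≠ 0 := by
    apply mul_ne_zero hD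
    apply Finset.prod_ne_zero_iff.mpr
    intro i _
    exact nonZeroDivisors.coe_ne_zero _
  obtain ⟨f, θ, hf, hfD', hfG⟩ := euclid_values G hGmonic hGdeg _ hD'
  refine ⟨f, hf, fun hfD => hfD' (hfD.mul_right _), ?_⟩
  intro i
  set Ei : Polynomial Fq := (e i : Polynomial Fq) with hEi
  have hfEi : ¬ f ∣ Ei := by
    intro hdvd
    exact hfD' (hdvd.trans (Dvd.dvd.mul_left (Finset.dvd_prod_of_mem _ (Finset.mem_univ i)) D))
  obtain ⟨g, hg⟩ := hdvd i
  have heval : ((h i).eval θ) ^ k₀ - Ei ^ k₀ * c i = (G.eval θ) * (g.eval θ) := by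
    have := congrArg (Polynomial.eval θ) hg
    simpa [eval_pow, eval_mul, eval_sub, eval_C] using this
  have hfmain : f ∣ ((h i).eval θ) ^ k₀ - Ei ^ k₀ * c i := by
    rw [heval]; exact hfG.mul_right _
  obtain ⟨u, v, huv⟩ := (hf.coprime_iff_not_dvd).mpr hfEi
  have hfv : f ∣ Ei * v - 1 := ⟨-u, by linear_combination huv⟩
  have hfvk : f ∣ (Ei * v) ^ k₀ - 1 := by
    have := sub_dvd_pow_sub_pow (Ei * v) 1 k₀
    rw [one_pow] at this
    exact dvd_trans hfv this
  refine ⟨(h i).eval θ * v, ?_⟩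
  have hident : ((h i).eval θ * v) ^ k₀ - c i
      = v ^ k₀ * (((h i).eval θ) ^ k₀ - Ei ^ k₀ * c i) + c i * ((Ei * v) ^ k₀ - 1) := by
    ring
  rw [hident]
  exact dvd_add (hfmain.mul_left _) (hfvk.mul_left _)

lemma upgrade_residue (f : Polynomial Fq) (hf : Irreducible f) {k a k₀ : ℕ}
    (hka : k = (ringChar Fq) ^ a * k₀)
    (c x : Polynomial Fq) (hx : f ∣ x ^ k₀ - c) :
    ∃ z : Polynomial Fq, z ^ k - c ∈ Ideal.span {f} := by
  classical
  set p := ringChar Fq with hp'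
  haveI : CharP Fq p := ringChar.charP Fq
  haveI hpfact : Fact p.Prime := ⟨CharP.char_is_prime Fq p⟩
  haveI hmax : (Ideal.span {f}).IsMaximal :=
    PrincipalIdealRing.isMaximal_of_irreducible hf
  let κ := Polynomial Fq ⧸ Ideal.span {f}
  letI : Field κ := Ideal.Quotient.field _
  haveI : Module.Finite Fq (AdjoinRoot f) :=
    Module.Finite.of_basis (AdjoinRoot.powerBasis hf.ne_zero).basis
  haveI : Finite κ := Module.finite_of_finite Fq (M := AdjoinRoot f)
  haveI : CharP κ p := charP_of_injective_algebraMap (algebraMap Fq κ).injective p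
  let π : Polynomial Fq →+* κ := Ideal.Quotient.mk (Ideal.span {f})
  have hxc : (π x) ^ k₀ = π c := by
    have : π (x ^ k₀ - c) = 0 := Ideal.Quotient.eq_zero_iff_mem.mpr
      (Ideal.mem_span_singleton.mpr hx)
    rw [map_sub, map_pow, sub_eq_zero] at this
    exact this
  have hsurj : Function.Surjective (fun z : κ => z ^ (p ^ a)) := by
    apply Finite.injective_iff_surjective.mp
    intro u v huv
    have h1 : (u - v) ^ (p ^ a) = 0 := by
      rw [sub_pow_char_pow]
      simpa using sub_eq_zero.mpr huv
    have := pow_eq_zero_iff (pow_ne_zero a hpfact.out.ne_zero) |>.mp h1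
    exact sub_eq_zero.mp this
  obtain ⟨y, hy⟩ := hsurj (π x)
  obtain ⟨z, hz⟩ := Ideal.Quotient.mk_surjective y
  refine ⟨z, ?_⟩
  rw [← Ideal.Quotient.eq_zero_iff_mem, map_sub, map_pow]
  have : (π z) ^ k = π c := by
    rw [hz, hka, pow_mul]
    simp only at hy
    rw [hy, hxc]
  rw [this, sub_self]

lemma subset_sum_coeff (S : Finset (Fin m)) (s₀ : Fin m) :
    (∑ s ∈ S, (X : Polynomial Fq) ^ (s : ℕ)).coeff (s₀ : ℕ) = if s₀ ∈ S then 1 else 0 := by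
  classical
  rw [finset_sum_coeff]
  have h1 : ∀ s ∈ S, ((X : Polynomial Fq) ^ (s:ℕ)).coeff (s₀:ℕ)
      = if s = s₀ then 1 else 0 := by
    intro s _
    rw [coeff_X_pow]
    congr 1
    simp [Fin.val_eq_val, eq_comm]
  rw [Finset.sum_congr rfl h1]
  simp

lemma subset_sum_injective {m : ℕ} :
    Function.Injective (fun S : Finset (Fin m) => ∑ s ∈ S, (X : Polynomial Fq) ^ (s : ℕ)) := by
  intro S S' h
  ext s₀
  have := congrArg (fun g : Polynomial Fq => g.coeff (s₀ : ℕ)) h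
  simp only [subset_sum_coeff] at this
  by_cases h1 : s₀ ∈ S <;> by_cases h2 : s₀ ∈ S' <;> simp_all

lemma Icc_endpoints {m : ℕ} {i j i' j' : Fin m} (hij : i ≤ j) (hij' : i' ≤ j')
    (h : Finset.Icc i j = Finset.Icc i' j') : i = i' ∧ j = j' := by
  have h1 : i ∈ Finset.Icc i' j' := h ▸ Finset.mem_Icc.mpr ⟨le_refl i, hij⟩
  have h2 : i' ∈ Finset.Icc i j := h ▸ Finset.mem_Icc.mpr ⟨le_refl i', hij'⟩
  have h3 : j ∈ Finset.Icc i' j' := h ▸ Finset.mem_Icc.mpr ⟨hij, le_refl j⟩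
  have h4 : j' ∈ Finset.Icc i j := h ▸ Finset.mem_Icc.mpr ⟨hij', le_refl j'⟩
  rw [Finset.mem_Icc] at h1 h2 h3 h4
  exact ⟨le_antisymm h2.1 h1.1, le_antisymm h3.2 h4.2⟩


end Helpers

open Polynomial in
theorem powers_of_T_permutation_chain (Fq : Type*) [Field Fq] [Fintype Fq]
    (k m : ℕ) (hk : 0 < k) (hm : 0 < m) :
    {P : Ideal (Polynomial Fq) | P ≠ ⊥ ∧ P.IsPrime ∧
      IsPermutationChain k P (fun i : Fin m => (Polynomial.X : Polynomial Fq) ^ (i : ℕ))}.Infinite := by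
  classical
  intro hfin
  set p := ringChar Fq with hpdef
  haveI : CharP Fq p := ringChar.charP Fq
  have hp : p.Prime := CharP.char_is_prime Fq p
  set k₀ := ordCompl[p] k with hk₀def
  have hka : k = p ^ (k.factorization p) * k₀ := (Nat.ordProj_mul_ordCompl_eq_self k p).symm
  have hpk₀ : ¬ p ∣ k₀ := Nat.not_dvd_ordCompl hp hk.ne'
  have hk₀Fq : (k₀ : Fq) ≠ 0 := fun h => hpk₀ ((CharP.cast_eq_zero_iff Fq p k₀).mp h)
  let ι := {S : Finset (Fin m) // S.Nonempty}
  let c : ι → Polynomial Fq := fun S => ∑ s ∈ S.1, X ^ (s : ℕ)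
  have hcinj : Function.Injective c := fun S S' h => Subtype.ext (subset_sum_injective h)
  have hc0 : ∀ i, c i ≠ 0 := by
    intro S h
    obtain ⟨s₀, hs₀⟩ := S.2
    have h2 := congrArg (fun g : Polynomial Fq => g.coeff (s₀ : ℕ)) h
    simp only [c, subset_sum_coeff, hs₀, if_pos, coeff_zero] at h2
    exact one_ne_zero h2
  -- the product of generators of the (assumed finitely many) good primes
  let gen : Ideal (Polynomial Fq) → Polynomial Fq := fun P =>
    if h : Submodule.IsPrincipal.generator P = 0 then 1 else Submodule.IsPrincipal.generator P
  have hgen0 : ∀ P, gen P ≠ 0 := by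
    intro P
    by_cases h : Submodule.IsPrincipal.generator P = 0 <;> simp [gen, h]
  let D₀ : Polynomial Fq := ∏ P ∈ hfin.toFinset, gen P
  let Dd : Polynomial Fq :=
    ∏ pr ∈ Finset.univ.filter (fun pr : ι × ι => pr.1 ≠ pr.2), (c pr.1 - c pr.2)
  have hD : D₀ * Dd ≠ 0 := by
    apply mul_ne_zero
    · exact Finset.prod_ne_zero_iff.mpr fun P _ => hgen0 P
    · exact Finset.prod_ne_zero_iff.mpr fun pr hpr =>
        sub_ne_zero.mpr (fun h => (Finset.mem_filter.mp hpr).2 (hcinj h))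
  obtain ⟨f, hf, hfD, hres⟩ := core_split k₀ hk₀Fq c hc0 hcinj _ hD
  set P := Ideal.span {f} with hPdef
  have hsum : ∀ (σ : Equiv.Perm (Fin m)) (i j : Fin m),
      (∑ l ∈ Finset.Icc i j, (fun i : Fin m => (X : Polynomial Fq) ^ (i : ℕ)) (σ l))
        = ∑ s ∈ (Finset.Icc i j).image σ, (X : Polynomial Fq) ^ (s : ℕ) := by
    intro σ i j
    rw [Finset.sum_image (fun x _ y _ h => σ.injective h)]
  have hPmem : P ∈ {P : Ideal (Polynomial Fq) | P ≠ ⊥ ∧ P.IsPrime ∧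
      IsPermutationChain k P (fun i : Fin m => (Polynomial.X : Polynomial Fq) ^ (i : ℕ))} := by
    refine ⟨?_, ?_, ?_⟩
    · rw [Ne, Ideal.span_singleton_eq_bot]; exact hf.ne_zero
    · exact (Ideal.span_singleton_prime hf.ne_zero).mpr
        (UniqueFactorizationMonoid.irreducible_iff_prime.mp hf)
    · intro σ
      constructor
      · intro i j i' j' hij hij' hne hmem
        rw [hsum σ i j, hsum σ i' j'] at hmem
        have hS : ((Finset.Icc i j).image σ).Nonempty :=
          ((Finset.nonempty_Icc).mpr hij).image σ
        have hS' : ((Finset.Icc i' j').image σ).Nonempty :=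
          ((Finset.nonempty_Icc).mpr hij').image σ
        have hSne : (⟨(Finset.Icc i j).image σ, hS⟩ : ι) ≠ ⟨(Finset.Icc i' j').image σ, hS'⟩ := by
          intro h
          have h2 : (Finset.Icc i j).image σ = (Finset.Icc i' j').image σ :=
            congrArg Subtype.val h
          have h3 := Finset.image_injective σ.injective h2
          obtain ⟨h4, h5⟩ := Icc_endpoints hij hij' h3
          exact hne (by rw [h4, h5])
        have hdvd1 : f ∣ c ⟨(Finset.Icc i j).image σ, hS⟩ - c ⟨(Finset.Icc i' j').image σ, hS'⟩ :=
          Ideal.mem_span_singleton.mp hmem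
        have hdvd2 : (c ⟨(Finset.Icc i j).image σ, hS⟩ - c ⟨(Finset.Icc i' j').image σ, hS'⟩) ∣ Dd := by
          apply Finset.dvd_prod_of_mem (fun pr : ι × ι => c pr.1 - c pr.2)
            (a := (⟨(Finset.Icc i j).image σ, hS⟩, ⟨(Finset.Icc i' j').image σ, hS'⟩))
          simp only [Finset.mem_filter, Finset.mem_univ, true_and]
          exact hSne
        exact hfD ((hdvd1.trans hdvd2).mul_left D₀)
      · intro i j hij
        have hS : ((Finset.Icc i j).image σ).Nonempty :=
          ((Finset.nonempty_Icc).mpr hij).image σ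
        obtain ⟨x, hx⟩ := hres ⟨(Finset.Icc i j).image σ, hS⟩
        obtain ⟨z, hz⟩ := upgrade_residue f hf hka (c ⟨(Finset.Icc i j).image σ, hS⟩) x hx
        refine ⟨z, ?_⟩
        rw [hsum σ i j]
        exact hz
  -- contradiction
  have hPP : gen P ∣ D₀ := Finset.dvd_prod_of_mem gen (hfin.mem_toFinset.mpr hPmem)
  have hgenne : Submodule.IsPrincipal.generator P ≠ 0 := by
    intro h
    have : P = ⊥ := (Submodule.IsPrincipal.eq_bot_iff_generator_eq_zero P).mpr h
    exact hPmem.1 this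
  have hfgen : f ∣ gen P := by
    have : Submodule.IsPrincipal.generator P ∈ Ideal.span {f} := Submodule.IsPrincipal.generator_mem P
    rw [Ideal.mem_span_singleton] at this
    simpa [gen, hgenne] using this
  exact hfD ((hfgen.trans hPP).mul_right Dd)
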